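/- Let k be a field, W a finite-dimensional k-vector space, q ∈ k a unit, F ∈ GL(W) and N ∈ End(W) with N ∘ F = q·(F ∘ N). Form the complex C(W, F, N, q) : W → W⊕W → W with maps w ↦ ((F−1)w, Nw) and (a,b) ↦ Na + (1 − qF)b. Let W* be the dual space, Fᵗ and Nᵗ the transpose maps, and set F' = q·Fᵗ, N' = Nᵗ; then N' ∘ F' = q⁻¹·(F' ∘ N'), so the complex C(W*, F', N', q⁻¹) is defined. Then for every i ∈ {0,1,2}, dim Hⁱ(C(W, F, N, q)) = dim H^{2−i}(C(W*, q·Fᵗ, Nᵗ, q⁻¹)). -/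

import Mathlib

open Module

/-- First differential `w ↦ ((F - 1)w, Nw)` of the Weil–Deligne complex. -/
noncomputable def wdD0 {k W : Type*} [Field k] [AddCommGroup W] [Module k W]
    (F N : W →ₗ[k] W) : W →ₗ[k] W × W :=
  (F - LinearMap.id).prod N

/-- Second differential `(a, b) ↦ Na + (1 - cF)b` of the Weil–Deligne complex. -/
noncomputable def wdD1 {k W : Type*} [Field k] [AddCommGroup W] [Module k W]
    (c : k) (F N : W →ₗ[k] W) : W × W →ₗ[k] W :=
  N ∘ₗ LinearMap.fst k W W + (LinearMap.id - c • F) ∘ₗ LinearMap.snd k W W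

/-- `H⁰` of the Weil–Deligne complex `C(W, F, N, c)`. -/
noncomputable abbrev wdH0 {k W : Type*} [Field k] [AddCommGroup W] [Module k W]
    (c : k) (F N : W →ₗ[k] W) : Submodule k W :=
  LinearMap.ker (wdD0 F N)

/-- `H¹ = ker d₁ / im d₀` of the Weil–Deligne complex `C(W, F, N, c)`. -/
noncomputable abbrev wdH1 {k W : Type*} [Field k] [AddCommGroup W] [Module k W]
    (c : k) (F N : W →ₗ[k] W) :=
  (LinearMap.ker (wdD1 c F N)) ⧸
    (Submodule.comap (LinearMap.ker (wdD1 c F N)).subtype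
      (LinearMap.range (wdD0 F N)))

/-- `H² = W / im d₁` of the Weil–Deligne complex `C(W, F, N, c)`. -/
noncomputable abbrev wdH2 {k W : Type*} [Field k] [AddCommGroup W] [Module k W]
    (c : k) (F N : W →ₗ[k] W) :=
  W ⧸ LinearMap.range (wdD1 c F N)


private lemma wd_aux_quot {k V : Type*} [Field k] [AddCommGroup V] [Module k V]
    [FiniteDimensional k V] (p q : Submodule k V) (h : q ≤ p) :
    finrank k (↥p ⧸ Submodule.comap p.subtype q) + finrank k q = finrank k p := by
  have hco : finrank k (Submodule.comap p.subtype q) = finrank k q :=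
    LinearEquiv.finrank_eq (Submodule.comapSubtypeEquivOfLe h)
  rw [← hco]
  exact Submodule.finrank_quotient_add_finrank _

set_option maxHeartbeats 1000000 in
set_option synthInstance.maxHeartbeats 400000 in
/-- Local Tate duality for Weil–Deligne cohomology: for a finite-dimensional
Weil–Deligne module `(W, F, N)` over a field `k`, with `q ≠ 0` and
`N ∘ F = q • (F ∘ N)`, the cohomology of `C(W, F, N, q)` is dual to that of
`C(W*, q·Fᵗ, Nᵗ, q⁻¹)`: `dim Hⁱ(C(W,F,N,q)) = dim H^{2-i}(C(W*, q·Fᵗ, Nᵗ, q⁻¹))`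
for `i = 0, 1, 2`. -/
theorem stmt6 (k W : Type*) [Field k] [AddCommGroup W] [Module k W]
    [FiniteDimensional k W] (q : k) (hq : q ≠ 0) (F : W ≃ₗ[k] W)
    (N : W →ₗ[k] W)
    (h : N ∘ₗ (F : W →ₗ[k] W) = q • ((F : W →ₗ[k] W) ∘ₗ N)) :
    finrank k (wdH0 q (F : W →ₗ[k] W) N)
        = finrank k (wdH2 q⁻¹ (q • (F : W →ₗ[k] W).dualMap) N.dualMap) ∧
    finrank k (wdH1 q (F : W →ₗ[k] W) N)
        = finrank k (wdH1 q⁻¹ (q • (F : W →ₗ[k] W).dualMap) N.dualMap) ∧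
    finrank k (wdH2 q (F : W →ₗ[k] W) N)
        = finrank k (wdH0 q⁻¹ (q • (F : W →ₗ[k] W).dualMap) N.dualMap) := by
  classical
  set F' : W →ₗ[k] W := (F : W →ₗ[k] W) with hF'
  -- the two sign/swap equivalences between `W* × W*` and `(W × W)*`
  let e1 : (Dual k W × Dual k W) ≃ₗ[k] Dual k (W × W) :=
    ((LinearEquiv.prodComm k _ _).trans
      ((LinearEquiv.neg k).prodCongr (LinearEquiv.refl k _))).trans
      (Module.dualProdDualEquivDual k W W)
  let e2 : (Dual k W × Dual k W) ≃ₗ[k] Dual k (W × W) :=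
    ((LinearEquiv.prodComm k _ _).trans
      ((LinearEquiv.refl k _).prodCongr (LinearEquiv.neg k))).trans
      (Module.dualProdDualEquivDual k W W)
  -- the dual differentials agree with duals of original differentials up to
  -- these equivalences
  have key1 : (wdD0 F' N).dualMap ∘ₗ (e1 : _ →ₗ[k] _)
      = wdD1 q⁻¹ (q • F'.dualMap) N.dualMap := by
    ext φ w <;>
    · show _ = _
      simp [e1, wdD0, wdD1, Module.dualProdDualEquivDual, LinearMap.dualMap_apply,
        LinearMap.sub_apply, smul_smul, inv_mul_cancel₀ hq]
      try ring
  have key2 : (e2 : _ →ₗ[k] _) ∘ₗ wdD0 (q • F'.dualMap) N.dualMap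
      = (wdD1 q F' N).dualMap := by
    ext φ w <;>
    · show _ = _
      simp [e2, wdD0, wdD1, Module.dualProdDualEquivDual, LinearMap.dualMap_apply]
      try ring
  -- rank equalities
  have rank1 : finrank k (LinearMap.range (wdD1 q⁻¹ (q • F'.dualMap) N.dualMap))
      = finrank k (LinearMap.range (wdD0 F' N)) := by
    rw [← key1, LinearMap.range_comp, LinearEquiv.range, Submodule.map_top,
      LinearMap.finrank_range_dualMap_eq_finrank_range]
  have rank2 : finrank k (LinearMap.range (wdD0 (q • F'.dualMap) N.dualMap))
      = finrank k (LinearMap.range (wdD1 q F' N)) := by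
    rw [← LinearMap.finrank_range_dualMap_eq_finrank_range (wdD1 q F' N),
      ← key2, LinearMap.range_comp, LinearEquiv.finrank_map_eq]
  -- the complexes are complexes
  have hle : LinearMap.range (wdD0 F' N) ≤ LinearMap.ker (wdD1 q F' N) := by
    rintro _ ⟨w, rfl⟩
    have hw : N (F' w) = q • F' (N w) := by
      have := LinearMap.ext_iff.mp h w
      simpa using this
    simp [wdD0, wdD1, hw]
    try abel
  have hle' : LinearMap.range (wdD0 (q • F'.dualMap) N.dualMap)
      ≤ LinearMap.ker (wdD1 q⁻¹ (q • F'.dualMap) N.dualMap) := by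
    rintro _ ⟨φ, rfl⟩
    have hw : ∀ w, φ (N (F' w)) = q * φ (F' (N w)) := by
      intro w
      have := LinearMap.ext_iff.mp h w
      simp only [LinearMap.comp_apply, LinearMap.smul_apply] at this
      rw [this]; simp
    simp only [wdD0, wdD1, LinearMap.mem_ker, LinearMap.add_apply,
      LinearMap.comp_apply, LinearMap.prod_apply, Pi.prod, LinearMap.fst_apply,
      LinearMap.snd_apply]
    ext w
    simp [LinearMap.dualMap_apply, LinearMap.sub_apply, hw w, smul_smul,
      inv_mul_cancel₀ hq]
    try ring
  -- dimension bookkeeping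
  set n := finrank k W with hn
  have hdual : finrank k (Dual k W) = n := Subspace.dual_finrank_eq
  have A0 : finrank k (LinearMap.range (wdD0 F' N))
      + finrank k (wdH0 q F' N) = n :=
    LinearMap.finrank_range_add_finrank_ker _
  have A0' : finrank k (LinearMap.range (wdD0 (q • F'.dualMap) N.dualMap))
      + finrank k (wdH0 q⁻¹ (q • F'.dualMap) N.dualMap) = n := by
    rw [LinearMap.finrank_range_add_finrank_ker, hdual]
  have A1 : finrank k (LinearMap.range (wdD1 q F' N))
      + finrank k (LinearMap.ker (wdD1 q F' N)) = n + n := by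
    rw [LinearMap.finrank_range_add_finrank_ker, Module.finrank_prod]
  have A1' : finrank k (LinearMap.range (wdD1 q⁻¹ (q • F'.dualMap) N.dualMap))
      + finrank k (LinearMap.ker (wdD1 q⁻¹ (q • F'.dualMap) N.dualMap))
      = n + n := by
    rw [LinearMap.finrank_range_add_finrank_ker, Module.finrank_prod, hdual]
  have A2 : finrank k (wdH2 q F' N)
      + finrank k (LinearMap.range (wdD1 q F' N)) = n :=
    Submodule.finrank_quotient_add_finrank _
  have A2' : finrank k (wdH2 q⁻¹ (q • F'.dualMap) N.dualMap)
      + finrank k (LinearMap.range (wdD1 q⁻¹ (q • F'.dualMap) N.dualMap))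
      = n := by
    rw [Submodule.finrank_quotient_add_finrank, hdual]
  have B1 : finrank k (wdH1 q F' N)
      + finrank k (LinearMap.range (wdD0 F' N))
      = finrank k (LinearMap.ker (wdD1 q F' N)) := by
    exact wd_aux_quot _ _ hle
  have B1' : finrank k (wdH1 q⁻¹ (q • F'.dualMap) N.dualMap)
      + finrank k (LinearMap.range (wdD0 (q • F'.dualMap) N.dualMap))
      = finrank k (LinearMap.ker (wdD1 q⁻¹ (q • F'.dualMap) N.dualMap)) := by
    exact wd_aux_quot _ _ hle'
  refine ⟨?_, ?_, ?_⟩ <;> omega
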